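/- There exists ε₁ > 0 such that for all ε with |ε| ≤ ε₁ and all z in the closed unit disc of ℂ, one has |(3 + 6z - z²)/8 + 2iε(z-1)² - iε(z-1)³| ≤ 1, with equality if and only if z = 1. -/

import Mathlib

set_option maxHeartbeats 1000000

lemma bound_mul (t M c B : ℝ) (h1 : -c ≤ t) (h2 : t ≤ c) (h3 : -B ≤ M) (h4 : M ≤ B) :
    t*M ≤ c*B := by
  have u1 : (0:ℝ) ≤ (c - t)*(B - M) := mul_nonneg (by linarith) (by linarith)
  have u2 : (0:ℝ) ≤ (c + t)*(B + M) := mul_nonneg (by linarith) (by linarith)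
  nlinarith [u1, u2]

lemma key_real (s a b ε : ℝ) (hr : 2*s - 2*a = a^2 + b^2)
    (hs : s ≤ 0) (hs2 : -s ≤ 1/2) (ha1 : a ≤ 0) (ha2 : -2 ≤ a) (hb : b^2 ≤ 1)
    (he1 : ε ≤ 1/128) (he2 : -(1/128) ≤ ε) :
    s*(1-(a^2+b^2)/8) - a^2/2 + 5*(a^2+b^2)^2/64
      + ε*(b*(-8*s+8*a^2+2*a*(a^2+b^2)-(a^2+b^2)^2/4))
      + ε^2*(a^2+b^2)^2*((2-a)^2+b^2) ≤ (1/5)*s - (1/40)*a^2 := by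
  have hr2nn : 0 ≤ a^2 + b^2 := by positivity
  have hr4 : a^2 + b^2 ≤ 4 := by nlinarith
  have hssq : s^2 ≤ (1/2)*(-s) := by nlinarith
  have hr2sq : (a^2+b^2)^2 ≤ 4*(-s) + 8*a^2 := by nlinarith [sq_nonneg (a+s)]
  -- cross term
  have ht1 : ε*b ≤ 1/128 := by nlinarith [sq_nonneg (ε - 1/128), sq_nonneg (ε + 1/128), sq_nonneg b, sq_nonneg (ε*b - 1/128), sq_nonneg ε]
  have ht2 : -(1/128) ≤ ε*b := by nlinarith [sq_nonneg (ε*b + 1/128), sq_nonneg ε]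
  have hM1 : -8*s+8*a^2+2*a*(a^2+b^2)-(a^2+b^2)^2/4 ≤ 13*(-s)+19*a^2 := by
    nlinarith [mul_nonneg (neg_nonneg.2 ha1) hr2nn, sq_nonneg (a^2+b^2)]
  have hM2 : -(13*(-s)+19*a^2) ≤ -8*s+8*a^2+2*a*(a^2+b^2)-(a^2+b^2)^2/4 := by
    nlinarith [sq_nonneg (a + (a^2+b^2))]
  have hcross : (ε*b)*(-8*s+8*a^2+2*a*(a^2+b^2)-(a^2+b^2)^2/4) ≤ (1/128)*(13*(-s)+19*a^2) :=
    bound_mul _ _ _ _ ht2 ht1 hM2 hM1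
  -- epsilon^2 term
  have he2' : ε^2 ≤ 1/16384 := by nlinarith
  have e1 : ε^2*(a^2+b^2)^2 ≤ (1/16384)*(4*(-s)+8*a^2) :=
    mul_le_mul he2' hr2sq (sq_nonneg _) (by norm_num)
  have h21 : (2-a)^2 + b^2 ≤ 17 := by nlinarith
  have e2 : ε^2*(a^2+b^2)^2*((2-a)^2+b^2) ≤ (1/16384)*(4*(-s)+8*a^2)*17 :=
    mul_le_mul e1 h21 (by positivity) (by nlinarith)
  -- main term
  have hP0 : s*(1-(a^2+b^2)/8) - a^2/2 + 5*(a^2+b^2)^2/64 ≤ -(11/32)*(-s) - (3/16)*a^2 := by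
    have hc : 11/32 ≤ 1 - (2*s-2*a)/8 - (5/8)*a + (5/16)*s := by linarith
    nlinarith [mul_nonneg (by linarith : (0:ℝ) ≤ -s)
      (by linarith : (0:ℝ) ≤ (1 - (2*s-2*a)/8 - (5/8)*a + (5/16)*s) - 11/32)]
  nlinarith [sq_nonneg a, hcross, hP0, e2]

noncomputable def FEps (ε : ℝ) (z : ℂ) : ℂ :=
  (3 + 6 * z - z ^ 2) / 8 + 2 * Complex.I * ε * (z - 1) ^ 2 - Complex.I * ε * (z - 1) ^ 3

lemma normSq_FEps (ε : ℝ) (z : ℂ) : Complex.normSq (FEps ε z) =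
    1 + ((z.re^2+z.im^2-1)/2*(1-(((z.re-1)^2+z.im^2))/8) - (z.re-1)^2/2
      + 5*((z.re-1)^2+z.im^2)^2/64
      + ε*(z.im*(-8*((z.re^2+z.im^2-1)/2)+8*(z.re-1)^2+2*(z.re-1)*((z.re-1)^2+z.im^2)
          -((z.re-1)^2+z.im^2)^2/4))
      + ε^2*((z.re-1)^2+z.im^2)^2*((2-(z.re-1))^2+z.im^2)) := by
  simp [FEps, Complex.normSq_apply, Complex.div_re, Complex.div_im, Complex.normSq, pow_succ, Complex.mul_re, Complex.mul_im]
  ring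

theorem exists_eps1_selfmap :
    ∃ ε₁ > (0:ℝ), ∀ ε : ℝ, |ε| ≤ ε₁ → ∀ z : ℂ, ‖z‖ ≤ 1 →
      ‖FEps ε z‖ ≤ 1 ∧ (‖FEps ε z‖ = 1 ↔ z = 1) := by
  refine ⟨1/128, by norm_num, fun ε hε z hz => ?_⟩
  obtain ⟨he2, he1⟩ := abs_le.1 hε
  have h1 : z.re^2 + z.im^2 ≤ 1 := by
    have h := Complex.sq_norm z
    rw [Complex.normSq_apply] at h
    nlinarith [norm_nonneg z]
  set x := z.re with hx
  set y := z.im with hy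
  have key := key_real ((x^2+y^2-1)/2) (x-1) y ε (by ring)
    (by linarith) (by nlinarith [sq_nonneg x, sq_nonneg y]) (by nlinarith [sq_nonneg y])
    (by nlinarith [sq_nonneg y]) (by nlinarith [sq_nonneg x]) he1 he2
  have hNS := normSq_FEps ε z
  rw [← hx, ← hy] at hNS
  have hle : Complex.normSq (FEps ε z) ≤ 1 + ((1/5)*((x^2+y^2-1)/2) - (1/40)*(x-1)^2) := by
    rw [hNS]; linarith
  have hq := Complex.sq_norm (FEps ε z)
  have habs : ‖FEps ε z‖ ≤ 1 := by
    nlinarith [norm_nonneg (FEps ε z), hle, hq, sq_nonneg (x-1), h1]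
  refine ⟨habs, ⟨fun h => ?_, fun h => ?_⟩⟩
  · have hns1 : Complex.normSq (FEps ε z) = 1 := by rw [← hq, h]; norm_num
    have hz1 : (x-1)^2 + y^2 ≤ 0 := by
      rw [hns1] at hle
      nlinarith [sq_nonneg (x-1), sq_nonneg y]
    have hxr : x = 1 := by nlinarith [sq_nonneg (x-1), sq_nonneg y]
    have hyr : y = 0 := by nlinarith [sq_nonneg (x-1), sq_nonneg y]
    exact Complex.ext hxr hyr
  · subst h
    have : FEps ε 1 = 1 := by
      simp [FEps]
      norm_num
    rw [this]
    simp
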